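/- With the interpolatory tangent-space projector P_Y Z = Z(:,J) V(J,:)^{-T} V^T − U U(I,:)^{-1} Z(I,J) V(J,:)^{-T} V^T + U U(I,:)^{-1} Z(I,:), the projection interpolates Z along the selected rows and columns: for every i ∈ I and every j ∈ {1,...,m}, (P_Y Z)(i,j) = Z(i,j), and for every j ∈ J and every i ∈ {1,...,n}, (P_Y Z)(i,j) = Z(i,j). -/
import Mathlib


open Matrix

/-- The interpolatory tangent-space projector
`P_Y Z = Z(:,J) V(J,:)⁻ᵀ Vᵀ − U U(I,:)⁻¹ Z(I,J) V(J,:)⁻ᵀ Vᵀ + U U(I,:)⁻¹ Z(I,:)`. -/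
noncomputable def PY {n m r : ℕ} (U : Matrix (Fin n) (Fin r) ℝ) (V : Matrix (Fin m) (Fin r) ℝ)
    (g : Fin r → Fin n) (h : Fin r → Fin m)
    (Z : Matrix (Fin n) (Fin m) ℝ) : Matrix (Fin n) (Fin m) ℝ :=
  Z.submatrix id h * ((V.submatrix h id)ᵀ)⁻¹ * Vᵀ
    - U * (U.submatrix g id)⁻¹ * Z.submatrix g h * ((V.submatrix h id)ᵀ)⁻¹ * Vᵀ
    + U * (U.submatrix g id)⁻¹ * Z.submatrix g id

/-- The interpolatory tangent-space projector interpolates `Z` along the selected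
rows `I` and columns `J`: `(P_Y Z)(i,j) = Z(i,j)` whenever `i ∈ I` or `j ∈ J`. -/
theorem oblique_tangent_projector_cross_interpolation
    {n m r : ℕ}
    (U : Matrix (Fin n) (Fin r) ℝ) (V : Matrix (Fin m) (Fin r) ℝ)
    (hU : Uᵀ * U = 1) (hV : Vᵀ * V = 1)
    (g : Fin r → Fin n) (hg : Function.Injective g)
    (h : Fin r → Fin m) (hh : Function.Injective h)
    (hUg : IsUnit (U.submatrix g id)) (hVh : IsUnit (V.submatrix h id))
    (Z : Matrix (Fin n) (Fin m) ℝ) :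
    (∀ (α : Fin r) (j : Fin m), PY U V g h Z (g α) j = Z (g α) j) ∧
    (∀ (i : Fin n) (β : Fin r), PY U V g h Z i (h β) = Z i (h β)) := by
  have hUinv : U.submatrix g id * (U.submatrix g id)⁻¹ = 1 :=
    Matrix.mul_nonsing_inv _ ((Matrix.isUnit_iff_isUnit_det _).mp hUg)
  have hVhT : IsUnit ((V.submatrix h id)ᵀ) := by
    rw [Matrix.isUnit_iff_isUnit_det, Matrix.det_transpose,
      ← Matrix.isUnit_iff_isUnit_det]
    exact hVh
  have hVinv : ((V.submatrix h id)ᵀ)⁻¹ * (V.submatrix h id)ᵀ = 1 :=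
    Matrix.nonsing_inv_mul _ ((Matrix.isUnit_iff_isUnit_det _).mp hVhT)
  have key1 : ∀ (X : Matrix (Fin r) (Fin m) ℝ) (α : Fin r) (j : Fin m),
      (U * (U.submatrix g id)⁻¹ * X) (g α) j = X α j := by
    intro X α j
    have h1 : (U * (U.submatrix g id)⁻¹ * X) (g α) j
        = ((U.submatrix g id * (U.submatrix g id)⁻¹) * X) α j := rfl
    rw [h1, hUinv, Matrix.one_mul]
  have key2 : ∀ (X : Matrix (Fin n) (Fin r) ℝ) (i : Fin n) (β : Fin r),
      (X * ((V.submatrix h id)ᵀ)⁻¹ * Vᵀ) i (h β) = X i β := by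
    intro X i β
    have h1 : (X * ((V.submatrix h id)ᵀ)⁻¹ * Vᵀ) i (h β)
        = ((X * ((V.submatrix h id)ᵀ)⁻¹) * (V.submatrix h id)ᵀ) i β := rfl
    rw [h1, Matrix.mul_assoc, hVinv, Matrix.mul_one]
  constructor
  · intro α j
    unfold PY
    simp only [Matrix.add_apply, Matrix.sub_apply]
    have e2 : (U * (U.submatrix g id)⁻¹ * Z.submatrix g h * ((V.submatrix h id)ᵀ)⁻¹ * Vᵀ)
        (g α) j = (Z.submatrix g h * ((V.submatrix h id)ᵀ)⁻¹ * Vᵀ) α j := by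
      rw [Matrix.mul_assoc (U * (U.submatrix g id)⁻¹),
        Matrix.mul_assoc (U * (U.submatrix g id)⁻¹)]
      exact key1 _ α j
    have e3 := key1 (Z.submatrix g id) α j
    have e1 : (Z.submatrix id h * ((V.submatrix h id)ᵀ)⁻¹ * Vᵀ) (g α) j
        = (Z.submatrix g h * ((V.submatrix h id)ᵀ)⁻¹ * Vᵀ) α j := rfl
    rw [e1, e2, e3]
    simp
  · intro i β
    unfold PY
    simp only [Matrix.add_apply, Matrix.sub_apply]
    have e1 := key2 (Z.submatrix id h) i β
    have e2 := key2 (U * (U.submatrix g id)⁻¹ * Z.submatrix g h) i β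
    have e3 : (U * (U.submatrix g id)⁻¹ * Z.submatrix g id) i (h β)
        = (U * (U.submatrix g id)⁻¹ * Z.submatrix g h) i β := rfl
    rw [e1, e2, e3]
    simp
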